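/- Let 1 ≤ p ≤ ∞ and let θ be an inner function with θ(0) = 0. Suppose u ∈ Re H^p. Then u ∈ Re K^p_θ if and only if the function ζ ↦ \bar{ζ} u(ζ) θ(ζ) on the unit circle T coincides m-a.e. with the boundary values of some function in H^p. -/

import Mathlib

open MeasureTheory Complex Set Metric ENNReal

noncomputable section

/-- Normalized Lebesgue (arclength) measure `m` on the unit circle `T`, as a measure on `ℂ`. -/
def circleMeasure : Measure ℂ :=
  (ENNReal.ofReal (2 * Real.pi))⁻¹ •
    Measure.map (fun t : ℝ => Complex.exp (t * Complex.I)) (volume.restrict (Ioc 0 (2 * Real.pi)))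

/-- The open unit disk `D`. -/
def unitDisk : Set ℂ := ball (0 : ℂ) 1

/-- `g` is, `m`-a.e. on the circle, the (radial) boundary-value function of `f`. -/
def IsBoundaryValue (f g : ℂ → ℂ) : Prop :=
  ∀ᵐ ζ ∂circleMeasure,
    Filter.Tendsto (fun r : ℝ => f (((r : ℂ)) * ζ)) (nhdsWithin 1 (Iio 1)) (nhds (g ζ))

/-- The Hardy norm `‖f‖_p`; for `p = ∞` it is the sup norm over the disk. -/
def hNorm (p : ℝ≥0∞) (f : ℂ → ℂ) : ℝ≥0∞ :=
  if p = ⊤ then ⨆ z : unitDisk, (‖f (z : ℂ)‖₊ : ℝ≥0∞)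
  else ⨆ r : Ioo (0 : ℝ) 1,
    (∫⁻ ζ, (‖f ((((r : ℝ) : ℂ)) * ζ)‖₊ : ℝ≥0∞) ^ p.toReal ∂circleMeasure) ^ (1 / p.toReal)

/-- Membership in the Hardy space `H^p` (with `f` identified with its boundary values,
i.e. the values of `f` on the circle are `m`-a.e. its radial limits from the disk). -/
def MemHp (p : ℝ≥0∞) (f : ℂ → ℂ) : Prop :=
  DifferentiableOn ℂ f unitDisk ∧ hNorm p f < ⊤ ∧ IsBoundaryValue f f

/-- Inner functions: bounded holomorphic with unimodular boundary values. -/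
def IsInner (θ : ℂ → ℂ) : Prop :=
  MemHp ⊤ θ ∧ ∀ᵐ ζ ∂circleMeasure, ‖θ ζ‖ = 1

/-- `θ` is nonconstant on the unit disk. -/
def Nonconstant (θ : ℂ → ℂ) : Prop := ¬ ∃ c : ℂ, ∀ z ∈ unitDisk, θ z = c

/-- Membership in the star-invariant subspace `K^p_θ`:  `f ∈ H^p` and the function
`ζ ↦ conj ζ * conj (f ζ) * θ ζ` on the circle coincides `m`-a.e. with (the boundary values of)
an `H^p` function. -/
def MemKp (p : ℝ≥0∞) (θ f : ℂ → ℂ) : Prop :=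
  MemHp p f ∧ ∃ h : ℂ → ℂ, MemHp p h ∧
    ∀ᵐ ζ ∂circleMeasure, h ζ = (starRingEnd ℂ) ζ * (starRingEnd ℂ) (f ζ) * θ ζ

/-- `u ∈ Re H^p`. -/
def MemReHp (p : ℝ≥0∞) (u : ℂ → ℝ) : Prop :=
  ∃ f : ℂ → ℂ, MemHp p f ∧ ∀ᵐ ζ ∂circleMeasure, u ζ = (f ζ).re

/-- `u ∈ Re K^p_θ`. -/
def MemReKp (p : ℝ≥0∞) (θ : ℂ → ℂ) (u : ℂ → ℝ) : Prop :=
  ∃ f : ℂ → ℂ, MemKp p θ f ∧ ∀ᵐ ζ ∂circleMeasure, u ζ = (f ζ).re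

lemma measurable_cexp : Measurable (fun t : ℝ => Complex.exp (t * Complex.I)) := by
  fun_prop
lemma circleMeasure_ae_norm : ∀ᵐ ζ ∂circleMeasure, ‖ζ‖ = 1 := by
  rw [ae_iff]
  have : {ζ : ℂ | ¬ ‖ζ‖ = 1} = (fun ζ : ℂ => ‖ζ‖) ⁻¹' {x | x ≠ 1} := rfl
  simp only [circleMeasure, Measure.smul_apply, smul_eq_mul]
  rw [Measure.map_apply measurable_cexp]
  · have : (fun t : ℝ => Complex.exp (t * Complex.I)) ⁻¹' {ζ : ℂ | ¬ ‖ζ‖ = 1} = ∅ := by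
      ext t
      simp [Complex.norm_exp]
    rw [this]
    simp
  · exact (measurableSet_eq_fun measurable_norm measurable_const).compl
lemma circleMeasure_univ : circleMeasure Set.univ = 1 := by
  simp only [circleMeasure, Measure.smul_apply, smul_eq_mul]
  rw [Measure.map_apply measurable_cexp MeasurableSet.univ]
  simp only [Set.preimage_univ, Measure.restrict_apply MeasurableSet.univ, Set.univ_inter,
    Real.volume_Ioc, sub_zero]
  rw [ENNReal.inv_mul_cancel]
  · simp only [ne_eq, ENNReal.ofReal_eq_zero, not_le]
    positivity
  · exact ofReal_ne_top
instance : IsProbabilityMeasure circleMeasure := ⟨circleMeasure_univ⟩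
lemma circleMeasure_restrict : circleMeasure.restrict (sphere (0:ℂ) 1) = circleMeasure := by
  apply Measure.restrict_eq_self_of_ae_mem
  filter_upwards [circleMeasure_ae_norm] with ζ hζ
  simpa [mem_sphere_iff_norm] using hζ
lemma aemeas_dil {f : ℂ → ℂ} (hf : ContinuousOn f unitDisk) {r : ℝ} (h0 : -1 < r) (h1 : r < 1) :
    AEMeasurable (fun ζ => f ((r : ℂ) * ζ)) circleMeasure := by
  have h : |r| < 1 := abs_lt.mpr ⟨h0, h1⟩
  · rw [← circleMeasure_restrict]
    apply ContinuousOn.aemeasurable _ (isClosed_sphere.measurableSet)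
    apply hf.comp (by fun_prop)
    intro ζ hζ
    simp only [mem_sphere_iff_norm, sub_zero] at hζ
    simp only [unitDisk, mem_ball, dist_zero_right, norm_mul, Complex.norm_real, hζ, mul_one,
      Real.norm_eq_abs]
    exact h
lemma lp_scale {pq : ℝ} (hpq : 1 ≤ pq) (c : NNReal) (F : ℂ → ℝ≥0∞) :
    (∫⁻ ζ, ((c:ℝ≥0∞) * F ζ)^pq ∂circleMeasure)^(1/pq)
      = (c:ℝ≥0∞) * (∫⁻ ζ, (F ζ)^pq ∂circleMeasure)^(1/pq) := by
  have hpq0 : (0:ℝ) < pq := by linarith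
  simp_rw [ENNReal.mul_rpow_of_nonneg _ _ hpq0.le]
  rw [lintegral_const_mul' _ _ (by exact ENNReal.rpow_ne_top_of_nonneg hpq0.le coe_ne_top)]
  rw [ENNReal.mul_rpow_of_nonneg _ _ (by positivity), ← ENNReal.rpow_mul,
    mul_one_div_cancel hpq0.ne', ENNReal.rpow_one]
lemma hNorm_lcomb {p : ℝ≥0∞} (hp : 1 ≤ p) (a b : ℂ) {f g : ℂ → ℂ}
    (hf : DifferentiableOn ℂ f unitDisk) (hg : DifferentiableOn ℂ g unitDisk) :
    hNorm p (fun z => a * f z + b * g z) ≤ ‖a‖₊ * hNorm p f + ‖b‖₊ * hNorm p g := by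
  unfold hNorm
  split_ifs with htop
  · refine iSup_le fun z => ?_
    have h1 : (‖a * f (z:ℂ) + b * g (z:ℂ)‖₊ : ℝ≥0∞)
        ≤ (‖a‖₊ : ℝ≥0∞) * ‖f (z:ℂ)‖₊ + (‖b‖₊ : ℝ≥0∞) * ‖g (z:ℂ)‖₊ := by
      calc (‖a * f (z:ℂ) + b * g (z:ℂ)‖₊ : ℝ≥0∞)
          ≤ (‖a * f (z:ℂ)‖₊ : ℝ≥0∞) + (‖b * g (z:ℂ)‖₊ : ℝ≥0∞) := by
            exact_mod_cast nnnorm_add_le _ _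
        _ = _ := by push_cast [nnnorm_mul]; ring
    exact h1.trans (add_le_add
      (mul_le_mul_right (le_iSup (fun w : unitDisk => (‖f (w:ℂ)‖₊ : ℝ≥0∞)) z) _)
      (mul_le_mul_right (le_iSup (fun w : unitDisk => (‖g (w:ℂ)‖₊ : ℝ≥0∞)) z) _))
  · have hq : 1 ≤ p.toReal := by
      rw [← ENNReal.toReal_one]
      exact ENNReal.toReal_mono htop hp
    refine iSup_le fun r => ?_
    have hr0 : (0:ℝ) < r := r.2.1
    have hr1 : (r:ℝ) < 1 := r.2.2
    have hF1 : AEMeasurable (fun ζ => ((‖a‖₊:ℝ≥0∞) * ‖f (((r:ℝ):ℂ) * ζ)‖₊)) circleMeasure :=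
      ((aemeas_dil hf.continuousOn (by linarith) hr1).nnnorm.coe_nnreal_ennreal).const_mul _
    have hF2 : AEMeasurable (fun ζ => ((‖b‖₊:ℝ≥0∞) * ‖g (((r:ℝ):ℂ) * ζ)‖₊)) circleMeasure :=
      ((aemeas_dil hg.continuousOn (by linarith) hr1).nnnorm.coe_nnreal_ennreal).const_mul _
    calc (∫⁻ ζ, (‖a * f (((r:ℝ):ℂ) * ζ) + b * g (((r:ℝ):ℂ) * ζ)‖₊ : ℝ≥0∞) ^ p.toReal
          ∂circleMeasure) ^ (1 / p.toReal)
        ≤ (∫⁻ ζ, ((fun ζ => (‖a‖₊:ℝ≥0∞) * ‖f (((r:ℝ):ℂ) * ζ)‖₊) ζ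
            + (fun ζ => (‖b‖₊:ℝ≥0∞) * ‖g (((r:ℝ):ℂ) * ζ)‖₊) ζ) ^ p.toReal
            ∂circleMeasure) ^ (1 / p.toReal) := by
          gcongr with ζ
          calc (‖a * f (((r:ℝ):ℂ) * ζ) + b * g (((r:ℝ):ℂ) * ζ)‖₊ : ℝ≥0∞)
              ≤ (‖a * f (((r:ℝ):ℂ) * ζ)‖₊ : ℝ≥0∞) + ‖b * g (((r:ℝ):ℂ) * ζ)‖₊ := by
                exact_mod_cast nnnorm_add_le _ _
            _ = _ := by push_cast [nnnorm_mul]; ring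
      _ ≤ (∫⁻ ζ, ((‖a‖₊:ℝ≥0∞) * ‖f (((r:ℝ):ℂ) * ζ)‖₊) ^ p.toReal ∂circleMeasure) ^ (1 / p.toReal)
          + (∫⁻ ζ, ((‖b‖₊:ℝ≥0∞) * ‖g (((r:ℝ):ℂ) * ζ)‖₊) ^ p.toReal ∂circleMeasure)
            ^ (1 / p.toReal) := ENNReal.lintegral_Lp_add_le hF1 hF2 hq
      _ = (‖a‖₊:ℝ≥0∞) * (∫⁻ ζ, (‖f (((r:ℝ):ℂ) * ζ)‖₊:ℝ≥0∞) ^ p.toReal ∂circleMeasure)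
            ^ (1 / p.toReal)
          + (‖b‖₊:ℝ≥0∞) * (∫⁻ ζ, (‖g (((r:ℝ):ℂ) * ζ)‖₊:ℝ≥0∞) ^ p.toReal ∂circleMeasure)
            ^ (1 / p.toReal) := by rw [lp_scale hq, lp_scale hq]
      _ ≤ _ := add_le_add
          (mul_le_mul_right (le_iSup (fun s : Ioo (0:ℝ) 1 => (∫⁻ ζ,
            (‖f (((s:ℝ):ℂ) * ζ)‖₊:ℝ≥0∞) ^ p.toReal ∂circleMeasure) ^ (1 / p.toReal)) r) _)
          (mul_le_mul_right (le_iSup (fun s : Ioo (0:ℝ) 1 => (∫⁻ ζ,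
            (‖g (((s:ℝ):ℂ) * ζ)‖₊:ℝ≥0∞) ^ p.toReal ∂circleMeasure) ^ (1 / p.toReal)) r) _)
lemma MemHp.lcomb {p : ℝ≥0∞} (hp : 1 ≤ p) (a b : ℂ) {f g : ℂ → ℂ}
    (hf : MemHp p f) (hg : MemHp p g) : MemHp p (fun z => a * f z + b * g z) := by
  refine ⟨((differentiableOn_const a).mul hf.1).add ((differentiableOn_const b).mul hg.1),
    ?_, ?_⟩
  · refine lt_of_le_of_lt (hNorm_lcomb hp a b hf.1 hg.1) ?_
    exact ENNReal.add_lt_top.mpr ⟨ENNReal.mul_lt_top coe_lt_top hf.2.1,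
      ENNReal.mul_lt_top coe_lt_top hg.2.1⟩
  · filter_upwards [hf.2.2, hg.2.2] with ζ h1 h2
    exact (tendsto_const_nhds.mul h1).add (tendsto_const_nhds.mul h2)
lemma inv_eq_conj_of_norm_one {ζ : ℂ} (h : ‖ζ‖ = 1) : ζ⁻¹ = (starRingEnd ℂ) ζ := by
  have h1 : (starRingEnd ℂ) ζ * ζ = 1 := by
    rw [mul_comm, Complex.mul_conj]
    norm_cast
    simp [Complex.normSq_eq_norm_sq, h]
  exact (eq_inv_of_mul_eq_one_left h1).symm
lemma MemHp.dslopeMul {p : ℝ≥0∞} (hp : 1 ≤ p) {g θ : ℂ → ℂ}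
    (hg : MemHp p g) (hθ : MemHp ⊤ θ) (hθ0 : θ 0 = 0) :
    MemHp p (dslope (fun z => g z * θ z) 0) ∧
      ∀ᵐ ζ ∂circleMeasure,
        dslope (fun z => g z * θ z) 0 ζ = (starRingEnd ℂ) ζ * g ζ * θ ζ := by
  set k : ℂ → ℂ := fun z => g z * θ z with hk_def
  have hk0 : k 0 = 0 := by simp [hk_def, hθ0]
  set D := dslope k 0 with hD_def
  have hmem : unitDisk ∈ nhds (0:ℂ) := isOpen_ball.mem_nhds (by simp [unitDisk])
  have hk : DifferentiableOn ℂ k unitDisk := hg.1.mul hθ.1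
  have hD : DifferentiableOn ℂ D unitDisk := by
    intro z hz
    rcases eq_or_ne z 0 with rfl | hne
    · obtain ⟨ps, hps⟩ := hk.analyticAt hmem
      exact
        hps.has_fpower_series_dslope_fslope.analyticAt.differentiableAt.differentiableWithinAt
    · exact (differentiableWithinAt_dslope_of_ne hne).2 (hk z hz)
  have hDval : ∀ z : ℂ, z ≠ 0 → D z = z⁻¹ * (g z * θ z) := by
    intro z hz
    rw [hD_def, dslope_of_ne k hz, slope_def_field]
    simp [hk_def, hθ0, div_eq_inv_mul]
  have hae : ∀ᵐ ζ ∂circleMeasure, D ζ = (starRingEnd ℂ) ζ * g ζ * θ ζ := by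
    filter_upwards [circleMeasure_ae_norm] with ζ hζ
    have hζ0 : ζ ≠ 0 := by intro h'; rw [h'] at hζ; simp at hζ
    rw [hDval ζ hζ0, inv_eq_conj_of_norm_one hζ, mul_assoc]
  have hbv : IsBoundaryValue D D := by
    filter_upwards [circleMeasure_ae_norm, hg.2.2, hθ.2.2] with ζ hζ h2 h3
    have hζ0 : ζ ≠ 0 := by intro h'; rw [h'] at hζ; simp at hζ
    have hev : ∀ᶠ r : ℝ in nhdsWithin 1 (Iio 1), 0 < r :=
      eventually_nhdsWithin_of_eventually_nhds (eventually_gt_nhds one_pos)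
    have htend : Filter.Tendsto (fun r : ℝ => ((r:ℂ) * ζ)⁻¹ * (g ((r:ℂ)*ζ) * θ ((r:ℂ)*ζ)))
        (nhdsWithin 1 (Iio 1)) (nhds (ζ⁻¹ * (g ζ * θ ζ))) := by
      have h1 : Filter.Tendsto (fun r : ℝ => (r:ℂ) * ζ) (nhdsWithin 1 (Iio 1)) (nhds ζ) := by
        have := ((Complex.continuous_ofReal.tendsto 1).mono_left nhdsWithin_le_nhds).mul
          (tendsto_const_nhds (x := ζ) (f := nhdsWithin (1:ℝ) (Iio 1)))
        simpa using this
      exact (h1.inv₀ hζ0).mul (h2.mul h3)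
    rw [hDval ζ hζ0]
    refine htend.congr' ?_
    filter_upwards [hev] with r hr
    have : (r:ℂ) * ζ ≠ 0 := mul_ne_zero (by exact_mod_cast hr.ne') hζ0
    rw [hDval _ this]
  have hSθ : hNorm ⊤ θ = ⨆ z : unitDisk, (‖θ (z : ℂ)‖₊ : ℝ≥0∞) := by rw [hNorm, if_pos rfl]
  set M : NNReal := (hNorm ⊤ θ).toNNReal with hM_def
  have hMθ : ∀ z ∈ unitDisk, ‖θ z‖₊ ≤ M := by
    intro z hz
    have h1 : (‖θ z‖₊ : ℝ≥0∞) ≤ hNorm ⊤ θ := by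
      rw [hSθ]; exact le_iSup (fun w : unitDisk => (‖θ (w:ℂ)‖₊ : ℝ≥0∞)) ⟨z, hz⟩
    have h2 : hNorm ⊤ θ = (M : ℝ≥0∞) := (ENNReal.coe_toNNReal hθ.2.1.ne).symm
    rw [h2] at h1
    exact_mod_cast h1
  have hDcont : ContinuousOn D (closedBall 0 (1/2)) :=
    (hD.continuousOn).mono (fun z hz => by
      simp only [unitDisk, mem_ball, mem_closedBall, dist_zero_right] at *
      linarith)
  obtain ⟨C, hC⟩ := (isCompact_closedBall (0:ℂ) (1/2)).exists_bound_of_continuousOn hDcont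
  have hDbig : ∀ z : ℂ, z ∈ unitDisk → 1/2 ≤ ‖z‖ →
      (‖D z‖₊ : ℝ≥0∞) ≤ ((2 * M : NNReal) : ℝ≥0∞) * ‖g z‖₊ := by
    intro z hz hhalf
    have hz0 : z ≠ 0 := by
      intro h'; rw [h'] at hhalf; simp at hhalf; linarith
    have hre : ‖D z‖ ≤ 2 * (M:ℝ) * ‖g z‖ := by
      rw [hDval z hz0]
      have hθz : ‖θ z‖ ≤ (M:ℝ) := by exact_mod_cast hMθ z hz
      have hinv : ‖z⁻¹‖ ≤ 2 := by
        rw [norm_inv, inv_le_comm₀ (by positivity) (by norm_num)]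
        linarith
      calc ‖z⁻¹ * (g z * θ z)‖ = ‖z⁻¹‖ * (‖g z‖ * ‖θ z‖) := by simp [norm_mul]
        _ ≤ 2 * (‖g z‖ * (M:ℝ)) := by
            apply mul_le_mul hinv (by gcongr) (by positivity) (by norm_num)
        _ = 2 * (M:ℝ) * ‖g z‖ := by ring
    have h2 : ‖D z‖₊ ≤ 2 * M * ‖g z‖₊ := by
      have : (‖D z‖₊ : ℝ) ≤ ((2 * M * ‖g z‖₊ : NNReal) : ℝ) := by push_cast; simpa using hre
      exact_mod_cast this
    calc (‖D z‖₊ : ℝ≥0∞) ≤ ((2 * M * ‖g z‖₊ : NNReal) : ℝ≥0∞) := ENNReal.coe_le_coe.mpr h2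
      _ = ((2 * M : NNReal) : ℝ≥0∞) * ‖g z‖₊ := by push_cast; ring
  have hCnn : ∀ z ∈ closedBall (0:ℂ) (1/2), (‖D z‖₊ : ℝ≥0∞) ≤ ENNReal.ofReal C := by
    intro z hz
    rw [show (‖D z‖₊ : ℝ≥0∞) = ENNReal.ofReal ‖D z‖ from (ofReal_norm _).symm]
    exact ENNReal.ofReal_le_ofReal (hC z hz)
  have hnorm : hNorm p D < ⊤ := by
    rw [hNorm]
    split_ifs with htop
    · refine lt_of_le_of_lt (iSup_le fun z => ?_)
        (show ENNReal.ofReal C + ((2 * M : NNReal) : ℝ≥0∞) * hNorm ⊤ g < ⊤ by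
          exact ENNReal.add_lt_top.mpr ⟨ofReal_lt_top,
            ENNReal.mul_lt_top coe_lt_top (htop ▸ hg.2.1)⟩)
      rcases le_or_gt (‖(z:ℂ)‖) (1/2) with hle | hlt
      · exact le_trans (hCnn z (by simpa [mem_closedBall, dist_zero_right] using hle))
          le_self_add
      · refine le_add_left ((hDbig z z.2 hlt.le).trans ?_)
        gcongr
        rw [hNorm, if_pos rfl]
        exact le_iSup (fun w : unitDisk => (‖g (w:ℂ)‖₊ : ℝ≥0∞)) z
    · have hp0 : p ≠ 0 := by rintro rfl; exact absurd hp (by simp)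
      have hq : 1 ≤ p.toReal := by
        rw [← ENNReal.toReal_one]; exact ENNReal.toReal_mono htop hp
      have hq0 : (0:ℝ) < p.toReal := by linarith
      have hgN : hNorm p g = ⨆ r : Ioo (0:ℝ) 1, (∫⁻ ζ,
          (‖g ((((r:ℝ)):ℂ) * ζ)‖₊ : ℝ≥0∞) ^ p.toReal ∂circleMeasure) ^ (1 / p.toReal) := by
        rw [hNorm, if_neg htop]
      refine lt_of_le_of_lt (iSup_le fun r => ?_)
        (show ENNReal.ofReal C + ((2 * M : NNReal) : ℝ≥0∞) * hNorm p g < ⊤ from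
          ENNReal.add_lt_top.mpr ⟨ofReal_lt_top, ENNReal.mul_lt_top coe_lt_top hg.2.1⟩)
      have hr0 : (0:ℝ) < r := r.2.1
      have hr1 : (r:ℝ) < 1 := r.2.2
      rcases le_or_gt (r:ℝ) (1/2) with hhalf | hhalf
      · -- small radius
        have hpt : ∀ᵐ ζ ∂circleMeasure, (‖D ((((r:ℝ)):ℂ) * ζ)‖₊ : ℝ≥0∞) ^ p.toReal
            ≤ (ENNReal.ofReal C) ^ p.toReal := by
          filter_upwards [circleMeasure_ae_norm] with ζ hζ
          refine ENNReal.rpow_le_rpow (hCnn _ ?_) hq0.le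
          rw [mem_closedBall, dist_zero_right, norm_mul, Complex.norm_real, Real.norm_eq_abs,
            abs_of_pos hr0, hζ, mul_one]
          exact hhalf
        calc (∫⁻ ζ, (‖D ((((r:ℝ)):ℂ) * ζ)‖₊ : ℝ≥0∞) ^ p.toReal ∂circleMeasure) ^ (1 / p.toReal)
            ≤ (∫⁻ _, (ENNReal.ofReal C) ^ p.toReal ∂circleMeasure) ^ (1 / p.toReal) :=
              ENNReal.rpow_le_rpow (lintegral_mono_ae hpt) (by positivity)
          _ = ENNReal.ofReal C := by
              rw [lintegral_const, measure_univ, mul_one, ← ENNReal.rpow_mul,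
                mul_one_div_cancel hq0.ne', ENNReal.rpow_one]
          _ ≤ _ := le_self_add
      · -- big radius
        have hpt : ∀ᵐ ζ ∂circleMeasure, (‖D ((((r:ℝ)):ℂ) * ζ)‖₊ : ℝ≥0∞) ^ p.toReal
            ≤ (((2 * M : NNReal) : ℝ≥0∞) * ‖g ((((r:ℝ)):ℂ) * ζ)‖₊) ^ p.toReal := by
          filter_upwards [circleMeasure_ae_norm] with ζ hζ
          have hnz : ‖(((r:ℝ)):ℂ) * ζ‖ = (r:ℝ) := by
            rw [norm_mul, Complex.norm_real, Real.norm_eq_abs, abs_of_pos hr0, hζ, mul_one]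
          refine ENNReal.rpow_le_rpow (hDbig _ ?_ ?_) hq0.le
          · simp only [unitDisk, mem_ball, dist_zero_right, hnz]; exact hr1
          · rw [hnz]; linarith
        calc (∫⁻ ζ, (‖D ((((r:ℝ)):ℂ) * ζ)‖₊ : ℝ≥0∞) ^ p.toReal ∂circleMeasure) ^ (1 / p.toReal)
            ≤ (∫⁻ ζ, (((2 * M : NNReal) : ℝ≥0∞)
                * (fun ζ => (‖g ((((r:ℝ)):ℂ) * ζ)‖₊ : ℝ≥0∞)) ζ) ^ p.toReal
                ∂circleMeasure) ^ (1 / p.toReal) :=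
              ENNReal.rpow_le_rpow (lintegral_mono_ae hpt) (by positivity)
          _ = ((2 * M : NNReal) : ℝ≥0∞) * (∫⁻ ζ, (‖g ((((r:ℝ)):ℂ) * ζ)‖₊ : ℝ≥0∞) ^ p.toReal
                ∂circleMeasure) ^ (1 / p.toReal) := lp_scale hq _ _
          _ ≤ ((2 * M : NNReal) : ℝ≥0∞) * hNorm p g := by
              gcongr
              rw [hgN]
              exact le_iSup (fun s : Ioo (0:ℝ) 1 => (∫⁻ ζ,
                (‖g ((((s:ℝ)):ℂ) * ζ)‖₊ : ℝ≥0∞) ^ p.toReal ∂circleMeasure) ^ (1 / p.toReal)) r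
          _ ≤ _ := le_add_self
  exact ⟨⟨hD, hnorm, hbv⟩, hae⟩

/-- Theorem 2.1(a): for `θ` inner with `θ(0) = 0` and `u ∈ Re H^p` (`1 ≤ p ≤ ∞`),
`u ∈ Re K^p_θ` iff `ζ ↦ conj ζ * u ζ * θ ζ` coincides `m`-a.e. with an `H^p` function. -/
theorem realParts_thetaZero (p : ℝ≥0∞) (hp : 1 ≤ p) (θ : ℂ → ℂ) (hθ : IsInner θ)
    (hθ0 : θ 0 = 0) (u : ℂ → ℝ) (hu : MemReHp p u) :
    MemReKp p θ u ↔
      ∃ h : ℂ → ℂ, MemHp p h ∧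
        ∀ᵐ ζ ∂circleMeasure, h ζ = (starRingEnd ℂ) ζ * (u ζ : ℂ) * θ ζ := by
  constructor
  · rintro ⟨g, ⟨hgHp, h, hhHp, hhae⟩, hug⟩
    obtain ⟨hDmem, hDae⟩ := MemHp.dslopeMul hp hgHp hθ.1 hθ0
    refine ⟨fun z => (1/2 : ℂ) * dslope (fun w => g w * θ w) 0 z + (1/2 : ℂ) * h z,
      MemHp.lcomb hp _ _ hDmem hhHp, ?_⟩
    filter_upwards [hDae, hhae, hug] with ζ h2 h3 h4
    rw [h2, h3, h4]
    have hre : (((g ζ).re : ℝ) : ℂ) = (g ζ + (starRingEnd ℂ) (g ζ)) / 2 := by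
      rw [Complex.add_conj]; push_cast; ring
    rw [hre]; ring
  · rintro ⟨H, hHHp, hHae⟩
    obtain ⟨f, hfHp, huf⟩ := hu
    obtain ⟨hDmem, hDae⟩ := MemHp.dslopeMul hp hfHp hθ.1 hθ0
    refine ⟨f, ⟨hfHp, fun z => (2 : ℂ) * H z + (-1 : ℂ) * dslope (fun w => f w * θ w) 0 z,
      MemHp.lcomb hp _ _ hHHp hDmem, ?_⟩, huf⟩
    filter_upwards [hHae, hDae, huf] with ζ h1 h2 h3
    rw [h1, h2, h3]
    have hc : (starRingEnd ℂ) (f ζ) = 2 * (((f ζ).re : ℝ) : ℂ) - f ζ := by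
      have h := Complex.add_conj (f ζ)
      push_cast at h
      linear_combination h
    rw [hc]; ring
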